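/- Let (Ω,T) be a minimal subshift over a finite alphabet A with associated set of words W, let B be a Banach space, and let f: Ω → B be continuous. For ω ∈ Ω and w ∈ W, let k_ω^w be the minimal nonnegative integer k with ω_k ω_{k+1} ⋯ ω_{k+|w|−1} = w (which exists by minimality), and set F_ω(w) = Σ_{j=0}^{|w|−1} f(T^{k_ω^w + j} ω). Then for every ω ∈ Ω the function F_ω: W → B is additive. -/

import Mathlib

open Filter Topology

namespace SubshiftErgodic

variable {A : Type*}

/-- The shift map `T` on two-sided sequences over `A`: `(T ω) n = ω (n+1)`. -/
def shift (ω : ℤ → A) : ℤ → A := fun n => ω (n + 1)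

/-- The `n`-th power of the shift: `(shiftZ n ω) k = ω (k + n)`. -/
def shiftZ (n : ℤ) (ω : ℤ → A) : ℤ → A := fun k => ω (k + n)

/-- `Ω` is a subshift: a closed, shift-invariant subset of `A^ℤ`. -/
def IsSubshift [TopologicalSpace A] (Ω : Set (ℤ → A)) : Prop :=
  IsClosed Ω ∧ shift '' Ω = Ω

/-- Minimality: every orbit `{T^n ω : n ∈ ℤ}` is dense in `Ω`. -/
def IsMinimal [TopologicalSpace A] (Ω : Set (ℤ → A)) : Prop :=
  ∀ ω ∈ Ω, Ω ⊆ closure {ρ | ∃ n : ℤ, ρ = shiftZ n ω}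

/-- The finite word `w` occurs in the sequence `ω` at position `k`. -/
def OccursAt (w : List A) (ω : ℤ → A) (k : ℤ) : Prop :=
  ∀ i : Fin w.length, ω (k + (i : ℕ)) = w.get i

/-- The set `W = W(Ω)` of finite words occurring as factors of elements of `Ω`. -/
def words (Ω : Set (ℤ → A)) : Set (List A) :=
  {w | ∃ ω ∈ Ω, ∃ k : ℤ, OccursAt w ω k}

/-- `v` occurs as a factor of the finite word `w` at position `i`. -/
def OccursIn (v w : List A) (i : ℕ) : Prop :=
  i + v.length ≤ w.length ∧ v <+: w.drop i

/-- `♯_v(w)`: the number of occurrences of `v` as a factor of `w`. -/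
noncomputable def occ (v w : List A) : ℕ :=
  {i : ℕ | OccursIn v w i}.ncard

/-- `z` is a return word of `u` (relative to the set of words `W`). -/
def IsReturnWord (W : Set (List A)) (z u : List A) : Prop :=
  z ∈ W ∧ z ++ u ∈ W ∧ occ u (z ++ u) = 2 ∧ u <+: z ++ u

/-- The maximal number of pairwise disjoint occurrences of `v` as a factor of `w`. -/
noncomputable def maxDisjoint (v w : List A) : ℕ :=
  sSup {m : ℕ | ∃ s : Fin m → ℕ, (∀ i, OccursIn v w (s i)) ∧
    ∀ i j : Fin m, i < j → s i + v.length ≤ s j}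

/-- The filter expressing `|w| → ∞` along words `w ∈ W`. -/
def wordsFilter (W : Set (List A)) : Filter (List A) :=
  ⨅ L : ℕ, Filter.principal {w | w ∈ W ∧ L ≤ w.length}

/-- `lim_{|w| → ∞} g w = x` over `w ∈ W`: for every `ε > 0` there is `L` with
`‖g w - x‖ ≤ ε` for all `w ∈ W` with `|w| ≥ L`. -/
def TendstoWords {B : Type*} [SeminormedAddCommGroup B] (W : Set (List A))
    (g : List A → B) (x : B) : Prop :=
  ∀ ε : ℝ, 0 < ε → ∃ L : ℕ, ∀ w ∈ W, L ≤ w.length → ‖g w - x‖ ≤ ε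

/-- `liminf_{|w| → ∞} g w` over `w ∈ W`, valued in the extended reals. -/
noncomputable def liminfWords (W : Set (List A)) (g : List A → ℝ) : EReal :=
  Filter.liminf (fun w => (g w : EReal)) (wordsFilter W)

/-- `limsup_{|w| → ∞} g w` over `w ∈ W`, valued in the extended reals. -/
noncomputable def limsupWords (W : Set (List A)) (g : List A → ℝ) : EReal :=
  Filter.limsup (fun w => (g w : EReal)) (wordsFilter W)

/-- `ν(v) = liminf_{|w| → ∞} l_v(w)/|w|`, where
`l_v(w) = (max number of pairwise disjoint copies of v in w) ⬝ |v|`. -/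
noncomputable def nu (W : Set (List A)) (v : List A) : EReal :=
  liminfWords W (fun w => ((maxDisjoint v w * v.length : ℕ) : ℝ) / (w.length : ℝ))

/-- Condition (PQ): uniform positivity of quasiweights. -/
def PQ (W : Set (List A)) : Prop :=
  ∃ C : ℝ, 0 < C ∧ ∀ v ∈ W, v ≠ [] → (C : EReal) ≤ nu W v

/-- Unique ergodicity: all word frequencies `♯_v(w)/|w|` converge as `|w| → ∞`. -/
def UniquelyErgodic (Ω : Set (ℤ → A)) : Prop :=
  ∀ v ∈ words Ω, ∃ x : ℝ,
    TendstoWords (words Ω) (fun w => (occ v w : ℝ) / (w.length : ℝ)) x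

/-- `F : W → ℝ` is subadditive. -/
def IsSubadditive (W : Set (List A)) (F : List A → ℝ) : Prop :=
  ∀ a b : List A, a ∈ W → b ∈ W → a ++ b ∈ W → F (a ++ b) ≤ F a + F b

/-- `F^(n) = max { F v / |v| : v ∈ W, |v| = n }`. -/
noncomputable def wordSup (W : Set (List A)) (F : List A → ℝ) (n : ℕ) : ℝ :=
  sSup ((fun v => F v / (v.length : ℝ)) '' {v | v ∈ W ∧ v.length = n})

/-- Condition (SET): the uniform subadditive ergodic theorem holds, i.e. for every
subadditive `F` the limit `lim_{|w|→∞} F(w)/|w|` exists and equals `inf_{n ≥ 1} F^(n)`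
(in the extended reals). -/
def SET (W : Set (List A)) : Prop :=
  ∀ F : List A → ℝ, IsSubadditive W F →
    Filter.Tendsto (fun w => ((F w / (w.length : ℝ) : ℝ) : EReal)) (wordsFilter W)
      (nhds (⨅ n : {n : ℕ // 1 ≤ n}, ((wordSup W F n.1 : ℝ) : EReal)))

/-- A Banach-space-valued function `F : W → B` is additive. -/
def IsAdditive {B : Type*} [SeminormedAddCommGroup B] (W : Set (List A))
    (F : List A → B) : Prop :=
  ∃ D : ℝ, 0 < D ∧ ∃ c : ℕ → ℝ, Antitone c ∧ (∀ n, 0 ≤ c n) ∧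
    Filter.Tendsto c Filter.atTop (nhds 0) ∧
    (∀ vs : List (List A), (∀ v ∈ vs, v ∈ W) → vs.flatten ∈ W →
      ‖F vs.flatten - (vs.map F).sum‖ ≤ (vs.map fun v => c v.length * (v.length : ℝ)).sum) ∧
    ∀ v ∈ W, ‖F v‖ ≤ D * (v.length : ℝ)

/-- Condition (HP): powers in `W` have uniformly bounded exponent. -/
def HP (W : Set (List A)) : Prop :=
  ∃ N : ℕ, 0 < N ∧ ∀ v : List A, v ≠ [] → ∀ k : ℕ,
    (List.replicate k v).flatten ∈ W → k ≤ N

/-- Condition (PW): uniform positivity of weights. -/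
def PW (W : Set (List A)) : Prop :=
  ∃ E : ℝ, 0 < E ∧ ∀ v ∈ W, v ≠ [] →
    (E : EReal) ≤ liminfWords W (fun w => ((occ v w * v.length : ℕ) : ℝ) / (w.length : ℝ))

/-- Linear repetitivity. -/
def LinearlyRepetitive (W : Set (List A)) : Prop :=
  ∃ D : ℝ, 0 < D ∧ ∀ v ∈ W, v ≠ [] → ∀ w ∈ W, D * (v.length : ℝ) ≤ (w.length : ℝ) →
    v <:+: w

/-- Aperiodicity: no element of `Ω` is periodic. -/
def Aperiodic (Ω : Set (ℤ → A)) : Prop :=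
  ∀ ω ∈ Ω, ∀ p : ℕ, 1 ≤ p → shiftZ (p : ℤ) ω ≠ ω

/-- `m(n)`: the minimal length of a return word of a word of length `n` in `W`. -/
noncomputable def mRet (W : Set (List A)) (n : ℕ) : ℕ :=
  sInf {k : ℕ | ∃ v z : List A, v ∈ W ∧ v.length = n ∧ IsReturnWord W z v ∧ z.length = k}

/-- `k_ω^w`: the minimal nonnegative position at which `w` occurs in `ω`. -/
noncomputable def firstOcc (ω : ℤ → A) (w : List A) : ℕ :=
  sInf {k : ℕ | OccursAt w ω (k : ℤ)}

/-- `F_ω(w) = ∑_{j=0}^{|w|-1} f(T^{k_ω^w + j} ω)`. -/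
noncomputable def birkhoffF {B : Type*} [AddCommMonoid B] (f : (ℤ → A) → B)
    (ω : ℤ → A) (w : List A) : B :=
  ∑ j ∈ Finset.range w.length, f (shiftZ ((firstOcc ω w : ℤ) + (j : ℤ)) ω)


section Aux

variable {A : Type*}

lemma shiftZ_shiftZ (m n : ℤ) (ω : ℤ → A) : shiftZ m (shiftZ n ω) = shiftZ (n + m) ω := by
  funext k
  simp only [shiftZ]
  congr 1
  ring

lemma continuous_shiftZ [TopologicalSpace A] (n : ℤ) :
    Continuous (shiftZ n : (ℤ → A) → (ℤ → A)) :=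
  continuous_pi fun k => continuous_apply (k + n)

lemma shiftZ_mem [TopologicalSpace A] {Ω : Set (ℤ → A)} (hΩ : IsSubshift Ω)
    {ω : ℤ → A} (hω : ω ∈ Ω) (n : ℤ) : shiftZ n ω ∈ Ω := by
  induction n using Int.induction_on with
  | zero =>
      have : shiftZ 0 ω = ω := by funext k; simp [shiftZ]
      rwa [this]
  | succ i ih =>
      have : shiftZ ((i : ℤ) + 1) ω = shift (shiftZ i ω) := by
        funext k; simp only [shiftZ, shift]; congr 1; ring
      rw [this, ← hΩ.2]
      exact Set.mem_image_of_mem _ ih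
  | pred i ih =>
      have h2 : shiftZ (-(i : ℤ)) ω ∈ shift '' Ω := by rw [hΩ.2]; exact ih
      obtain ⟨ρ, hρ, hshift⟩ := h2
      have : shiftZ (-(i : ℤ) - 1) ω = ρ := by
        funext k
        have := congrFun hshift (k - 1)
        simp only [shift, shiftZ] at this ⊢
        rw [show k + (-(i:ℤ) - 1) = k - 1 + -(i:ℤ) by ring, ← this]
        congr 1; ring
      rw [this]; exact hρ

lemma occursAt_shiftZ {w : List A} {ω : ℤ → A} {n k : ℤ} :
    OccursAt w (shiftZ n ω) k ↔ OccursAt w ω (k + n) := by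
  constructor
  · intro h i
    have := h i
    simp only [shiftZ] at this
    rw [show k + n + (i : ℕ) = k + (i : ℕ) + n by ring]
    exact this
  · intro h i
    have := h i
    simp only [shiftZ]
    rw [show k + (i : ℕ) + n = k + n + (i : ℕ) by ring]
    exact this

lemma isOpen_cylinder0 [TopologicalSpace A] [DiscreteTopology A] (w : List A) :
    IsOpen {ρ : ℤ → A | OccursAt w ρ 0} := by
  have : {ρ : ℤ → A | OccursAt w ρ 0}
      = ⋂ i : Fin w.length, (fun ρ : ℤ → A => ρ ((0 : ℤ) + (i : ℕ))) ⁻¹' {w.get i} := by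
    ext ρ
    simp [OccursAt, Set.mem_iInter]
  rw [this]
  exact isOpen_iInter_of_finite fun i =>
    (continuous_apply _).isOpen_preimage _ (isOpen_discrete _)

lemma exists_nat_occursAt [Finite A] [TopologicalSpace A] [DiscreteTopology A]
    {Ω : Set (ℤ → A)} (hΩ : IsSubshift Ω) (hmin : IsMinimal Ω)
    {v : List A} (hv : v ∈ words Ω) {ω : ℤ → A} (hω : ω ∈ Ω) :
    ∃ k : ℕ, OccursAt v ω (k : ℤ) := by
  obtain ⟨ω', hω', k₀, hk₀⟩ := hv
  set U : Set (ℤ → A) := {ρ | OccursAt v ρ 0} with hU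
  have hUopen : IsOpen U := isOpen_cylinder0 v
  have hcover : Ω ⊆ ⋃ n : ℤ, shiftZ n ⁻¹' U := by
    intro ρ hρ
    have h1 : shiftZ k₀ ω' ∈ Ω := shiftZ_mem hΩ hω' k₀
    have h2 : shiftZ k₀ ω' ∈ U := by
      simp only [hU, Set.mem_setOf_eq]
      rw [occursAt_shiftZ, zero_add]
      exact hk₀
    have h3 : shiftZ k₀ ω' ∈ closure {ρ' | ∃ n : ℤ, ρ' = shiftZ n ρ} := hmin ρ hρ h1
    obtain ⟨x, hxU, n, rfl⟩ := mem_closure_iff.1 h3 U hUopen h2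
    exact Set.mem_iUnion.2 ⟨n, hxU⟩
  have hcompact : IsCompact Ω := hΩ.1.isCompact
  obtain ⟨t, ht⟩ := hcompact.elim_finite_subcover (fun n : ℤ => shiftZ n ⁻¹' U)
    (fun n => hUopen.preimage (continuous_shiftZ n)) hcover
  set m : ℕ := t.sup fun n => (-n).toNat with hm
  have hmem : shiftZ (m : ℤ) ω ∈ Ω := shiftZ_mem hΩ hω _
  obtain ⟨n, hn, hin⟩ := Set.mem_iUnion₂.1 (ht hmem)
  have hnn : 0 ≤ (m : ℤ) + n := by
    have h1 : (-n).toNat ≤ m := Finset.le_sup (f := fun n : ℤ => (-n).toNat) hn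
    have h2 : -n ≤ ((-n).toNat : ℤ) := Int.self_le_toNat _
    have h3 : ((-n).toNat : ℤ) ≤ (m : ℤ) := by exact_mod_cast h1
    omega
  have : shiftZ n (shiftZ (m : ℤ) ω) ∈ U := hin
  rw [shiftZ_shiftZ] at this
  have hocc : OccursAt v ω ((m : ℤ) + n) := by
    have := (occursAt_shiftZ (n := (m : ℤ) + n)).1 this
    simpa using this
  refine ⟨((m : ℤ) + n).toNat, ?_⟩
  rwa [Int.toNat_of_nonneg hnn]

lemma exists_cylinder_subset [TopologicalSpace A] [DiscreteTopology A]
    {x : ℤ → A} {U : Set (ℤ → A)} (hU : U ∈ nhds x) :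
    ∃ m : ℕ, {y : ℤ → A | ∀ i : ℤ, |i| ≤ (m : ℤ) → y i = x i} ⊆ U := by
  rw [nhds_pi, Filter.mem_pi] at hU
  obtain ⟨I, hIfin, t, htmem, hsub⟩ := hU
  refine ⟨hIfin.toFinset.sup fun i => i.natAbs, fun y hy => ?_⟩
  apply hsub
  intro i hi
  have hiI : i ∈ hIfin.toFinset := hIfin.mem_toFinset.2 hi
  have h1 : i.natAbs ≤ hIfin.toFinset.sup fun i => i.natAbs := Finset.le_sup hiI
  have hyx : y i = x i := hy i (by rw [Int.abs_eq_natAbs]; exact_mod_cast h1)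
  rw [hyx]
  exact mem_of_mem_nhds (htmem i)

lemma isOpen_cylinder_sym [TopologicalSpace A] [DiscreteTopology A] (x : ℤ → A) (m : ℕ) :
    IsOpen {y : ℤ → A | ∀ i : ℤ, |i| ≤ (m : ℤ) → y i = x i} := by
  have : {y : ℤ → A | ∀ i : ℤ, |i| ≤ (m : ℤ) → y i = x i}
      = ⋂ i ∈ Finset.Icc (-(m : ℤ)) (m : ℤ), (fun y : ℤ → A => y i) ⁻¹' {x i} := by
    ext y
    simp only [Set.mem_setOf_eq, Set.mem_iInter, Finset.mem_Icc, Set.mem_preimage,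
      Set.mem_singleton_iff]
    constructor
    · intro h i hi; exact h i (abs_le.2 hi)
    · intro h i hi; exact h i (abs_le.1 hi)
  rw [this]
  exact isOpen_biInter_finset fun i _ =>
    (continuous_apply i).isOpen_preimage _ (isOpen_discrete _)

lemma uniform_mod [Finite A] [TopologicalSpace A] [DiscreteTopology A]
    {Ω : Set (ℤ → A)} (hclosed : IsClosed Ω)
    {B : Type*} [NormedAddCommGroup B] {f : (ℤ → A) → B} (hf : ContinuousOn f Ω)
    {ε : ℝ} (hε : 0 < ε) :
    ∃ m : ℕ, ∀ x ∈ Ω, ∀ y ∈ Ω, (∀ i : ℤ, |i| ≤ (m : ℤ) → x i = y i) → ‖f x - f y‖ ≤ ε := by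
  have key : ∀ x : Ω, ∃ m : ℕ, ∀ y ∈ Ω,
      (∀ i : ℤ, |i| ≤ (m : ℤ) → y i = (x : ℤ → A) i) → ‖f y - f (x : ℤ → A)‖ < ε / 2 := by
    rintro ⟨x, hx⟩
    have hcx : ContinuousWithinAt f Ω x := hf x hx
    have hball : f ⁻¹' Metric.ball (f x) (ε / 2) ∈ nhdsWithin x Ω :=
      hcx (Metric.ball_mem_nhds _ (by positivity))
    obtain ⟨U, hUopen, hxU, hUsub⟩ := mem_nhdsWithin.1 hball
    obtain ⟨m, hm⟩ := exists_cylinder_subset (hUopen.mem_nhds hxU)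
    refine ⟨m, fun y hy hagree => ?_⟩
    have h1 : y ∈ U := hm hagree
    have h2 := hUsub ⟨h1, hy⟩
    rw [Set.mem_preimage, Metric.mem_ball, dist_eq_norm] at h2
    exact h2
  choose mfun hmfun using key
  have hcompact : IsCompact Ω := hclosed.isCompact
  have hcover : Ω ⊆ ⋃ x : Ω, {y : ℤ → A | ∀ i : ℤ, |i| ≤ (mfun x : ℤ) → y i = (x : ℤ → A) i} := by
    intro z hz
    exact Set.mem_iUnion.2 ⟨⟨z, hz⟩, fun i _ => rfl⟩
  obtain ⟨t, ht⟩ := hcompact.elim_finite_subcover _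
    (fun x : Ω => isOpen_cylinder_sym (x : ℤ → A) (mfun x)) hcover
  refine ⟨t.sup mfun, fun x hx y hy hagree => ?_⟩
  obtain ⟨x₀, hx₀t, hxcyl⟩ := Set.mem_iUnion₂.1 (ht hx)
  have hle : mfun x₀ ≤ t.sup mfun := Finset.le_sup hx₀t
  have hycyl : ∀ i : ℤ, |i| ≤ (mfun x₀ : ℤ) → y i = (x₀ : ℤ → A) i := by
    intro i hi
    have h1 : |i| ≤ ((t.sup mfun : ℕ) : ℤ) := le_trans hi (by exact_mod_cast hle)
    rw [← hagree i h1]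
    exact hxcyl i hi
  have h1 : ‖f x - f (x₀ : ℤ → A)‖ < ε / 2 := hmfun x₀ x hx hxcyl
  have h2 : ‖f y - f (x₀ : ℤ → A)‖ < ε / 2 := hmfun x₀ y hy hycyl
  have h3 : f x - f y = (f x - f (x₀ : ℤ → A)) - (f y - f (x₀ : ℤ → A)) := by abel
  rw [h3]
  calc ‖(f x - f (x₀ : ℤ → A)) - (f y - f (x₀ : ℤ → A))‖
      ≤ ‖f x - f (x₀ : ℤ → A)‖ + ‖f y - f (x₀ : ℤ → A)‖ := norm_sub_le _ _
    _ ≤ ε := by linarith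

lemma occursAt_append_left {v u : List A} {ω : ℤ → A} {k : ℤ}
    (h : OccursAt (v ++ u) ω k) : OccursAt v ω k := by
  intro i
  have hi : (i : ℕ) < (v ++ u).length := by
    simp only [List.length_append]
    exact lt_of_lt_of_le i.2 (Nat.le_add_right _ _)
  have := h ⟨(i : ℕ), hi⟩
  simpa [List.get_eq_getElem, List.getElem_append_left i.2] using this

lemma occursAt_append_right {v u : List A} {ω : ℤ → A} {k : ℤ}
    (h : OccursAt (v ++ u) ω k) : OccursAt u ω (k + v.length) := by
  intro i
  have hi : v.length + (i : ℕ) < (v ++ u).length := by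
    simp only [List.length_append]
    omega
  have h2 := h ⟨v.length + (i : ℕ), hi⟩
  simp only [List.get_eq_getElem] at h2 ⊢
  rw [List.getElem_append_right (by omega)] at h2
  simp only [Nat.add_sub_cancel_left] at h2
  rw [show k + (v.length : ℤ) + (i : ℕ) = k + ((v.length + (i : ℕ) : ℕ) : ℤ) by push_cast; ring]
  exact h2

end Aux
/-- on a minimal subshift, for every `ω ∈ Ω` the function
`F_ω(w) = ∑_{j<|w|} f(T^{k_ω^w+j} ω)` built from a continuous `f` is additive. -/
theorem birkhoffF_isAdditive
    {A : Type*} [Fintype A] [Nonempty A] [TopologicalSpace A] [DiscreteTopology A]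
    (Ω : Set (ℤ → A)) (hΩ : IsSubshift Ω) (hne : Ω.Nonempty) (hmin : IsMinimal Ω)
    (B : Type*) [NormedAddCommGroup B] [NormedSpace ℝ B] [CompleteSpace B]
    (f : (ℤ → A) → B) (hf : ContinuousOn f Ω) :
    ∀ ω ∈ Ω, IsAdditive (words Ω) (birkhoffF f ω) := by
  intro ω hω
  classical
  obtain ⟨ω₀, hω₀⟩ := hne
  have hcompact : IsCompact Ω := hΩ.1.isCompact
  obtain ⟨M, hM⟩ := hcompact.exists_bound_of_continuousOn hf
  have hM0 : 0 ≤ M := le_trans (norm_nonneg (f ω₀)) (hM ω₀ hω₀)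
  set P : ℕ → Set ((ℤ → A) × (ℤ → A)) := fun m =>
    {p | p.1 ∈ Ω ∧ p.2 ∈ Ω ∧ ∀ i : ℤ, |i| ≤ (m : ℤ) → p.1 i = p.2 i} with hP
  set δ : ℕ → ℝ := fun m =>
    sSup ((fun p : (ℤ → A) × (ℤ → A) => ‖f p.1 - f p.2‖) '' P m) with hδdef
  have hPmem : ∀ m, ((ω₀, ω₀) : (ℤ → A) × (ℤ → A)) ∈ P m :=
    fun m => ⟨hω₀, hω₀, fun _ _ => rfl⟩
  have hbdd : ∀ m, BddAbove ((fun p : (ℤ → A) × (ℤ → A) => ‖f p.1 - f p.2‖) '' P m) := by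
    intro m
    refine ⟨2 * M, ?_⟩
    rintro r ⟨p, hp, rfl⟩
    calc ‖f p.1 - f p.2‖ ≤ ‖f p.1‖ + ‖f p.2‖ := norm_sub_le _ _
      _ ≤ 2 * M := by
          have := hM p.1 hp.1; have := hM p.2 hp.2.1; linarith
  have hδ0le : ∀ m, 0 ≤ δ m := by
    intro m
    have hmem : (0 : ℝ) ∈ (fun p : (ℤ → A) × (ℤ → A) => ‖f p.1 - f p.2‖) '' P m :=
      ⟨(ω₀, ω₀), hPmem m, by simp⟩
    exact le_csSup (hbdd m) hmem
  have hδle : ∀ m : ℕ, ∀ x ∈ Ω, ∀ y ∈ Ω,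
      (∀ i : ℤ, |i| ≤ (m : ℤ) → x i = y i) → ‖f x - f y‖ ≤ δ m := by
    intro m x hx y hy hagree
    exact le_csSup (hbdd m) ⟨(x, y), ⟨hx, hy, hagree⟩, rfl⟩
  have hδanti : Antitone δ := by
    intro a b hab
    have hne2 : ((fun p : (ℤ → A) × (ℤ → A) => ‖f p.1 - f p.2‖) '' P b).Nonempty :=
      ⟨‖f ω₀ - f ω₀‖, ⟨(ω₀, ω₀), hPmem b, rfl⟩⟩
    have hsubset : P b ⊆ P a := by
      rintro p ⟨h1, h2, h3⟩
      exact ⟨h1, h2, fun i hi => h3 i (le_trans hi (by exact_mod_cast hab))⟩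
    exact csSup_le_csSup (hbdd a) hne2 (Set.image_mono hsubset)
  have hδtend : Filter.Tendsto δ Filter.atTop (nhds 0) := by
    rw [Metric.tendsto_atTop]
    intro ε hε
    obtain ⟨m₀, hm₀⟩ := uniform_mod hΩ.1 hf (half_pos hε)
    refine ⟨m₀, fun n hn => ?_⟩
    have h1 : δ m₀ ≤ ε / 2 := by
      have hne3 : ((fun p : (ℤ → A) × (ℤ → A) => ‖f p.1 - f p.2‖) '' P m₀).Nonempty :=
        ⟨‖f ω₀ - f ω₀‖, ⟨(ω₀, ω₀), hPmem m₀, rfl⟩⟩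
      apply csSup_le hne3
      rintro r ⟨p, ⟨hp1, hp2, hp3⟩, rfl⟩
      exact hm₀ p.1 hp1 p.2 hp2 hp3
    have h2 : δ n ≤ δ m₀ := hδanti hn
    have h3 : 0 ≤ δ n := hδ0le n
    have h4 : dist (δ n) 0 = δ n := by
      rw [Real.dist_eq, sub_zero, abs_of_nonneg h3]
    rw [h4]; linarith
  have hsum_nonneg : ∀ n : ℕ, 0 ≤ ∑ i ∈ Finset.range n, δ i :=
    fun n => Finset.sum_nonneg fun i _ => hδ0le i
  set c : ℕ → ℝ := fun n =>
    if n = 0 then 2 * δ 0 else 2 * (∑ i ∈ Finset.range n, δ i) / n with hcdef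
  have hcval : ∀ n : ℕ, n ≠ 0 → c n = 2 * (∑ i ∈ Finset.range n, δ i) / n := by
    intro n hn; simp only [hcdef, if_neg hn]
  have hcnonneg : ∀ n, 0 ≤ c n := by
    intro n
    rcases Nat.eq_zero_or_pos n with h | h
    · subst h; simp only [hcdef, if_pos rfl]; linarith [hδ0le 0]
    · rw [hcval n (by omega)]
      apply div_nonneg (by linarith [hsum_nonneg n]) (Nat.cast_nonneg n)
  have hcanti : Antitone c := by
    apply antitone_nat_of_succ_le
    intro n
    rcases Nat.eq_zero_or_pos n with h | h
    · subst h
      rw [hcval 1 one_ne_zero]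
      simp only [hcdef, if_pos rfl]
      simp
    · rw [hcval (n + 1) (by omega), hcval n (by omega)]
      rw [div_le_div_iff₀ (by exact_mod_cast Nat.succ_pos n) (by exact_mod_cast h)]
      have hstep : (n : ℝ) * δ n ≤ ∑ i ∈ Finset.range n, δ i := by
        have := Finset.card_nsmul_le_sum (Finset.range n) δ (δ n)
          (fun i hi => hδanti (le_of_lt (Finset.mem_range.1 hi)))
        simpa [nsmul_eq_mul] using this
      rw [Finset.sum_range_succ]
      push_cast
      nlinarith [hsum_nonneg n, hδ0le n]
  have hctend : Filter.Tendsto c Filter.atTop (nhds 0) := by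
    have hces := hδtend.cesaro
    have h2 : Filter.Tendsto (fun n : ℕ => 2 * ((n : ℝ)⁻¹ * ∑ i ∈ Finset.range n, δ i))
        Filter.atTop (nhds 0) := by
      simpa using hces.const_mul 2
    apply h2.congr'
    filter_upwards [Filter.eventually_ge_atTop 1] with n hn
    rw [hcval n (by omega), div_eq_mul_inv]
    ring
  have hocc : ∀ v ∈ words Ω, OccursAt v ω ((firstOcc ω v : ℕ) : ℤ) := by
    intro v hv
    have hne' : {k : ℕ | OccursAt v ω (k : ℤ)}.Nonempty :=
      exists_nat_occursAt hΩ hmin hv hω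
    exact Nat.sInf_mem hne'
  -- single word estimate
  have single : ∀ v ∈ words Ω, ∀ k : ℤ, OccursAt v ω k →
      ‖(∑ j ∈ Finset.range v.length, f (shiftZ (k + (j : ℤ)) ω)) - birkhoffF f ω v‖
        ≤ c v.length * (v.length : ℝ) := by
    intro v hv k hk
    rcases Nat.eq_zero_or_pos v.length with hL | hL
    · simp [birkhoffF, hL]
    set L := v.length with hLdef
    set k' : ℤ := ((firstOcc ω v : ℕ) : ℤ) with hk'def
    have hk' : OccursAt v ω k' := hocc v hv
    have hsub : (∑ j ∈ Finset.range L, f (shiftZ (k + (j : ℤ)) ω)) - birkhoffF f ω v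
        = ∑ j ∈ Finset.range L, (f (shiftZ (k + (j : ℤ)) ω) - f (shiftZ (k' + (j : ℤ)) ω)) := by
      rw [Finset.sum_sub_distrib]; rfl
    rw [hsub]
    have hterm : ∀ j ∈ Finset.range L,
        ‖f (shiftZ (k + (j : ℤ)) ω) - f (shiftZ (k' + (j : ℤ)) ω)‖ ≤ δ (min j (L - 1 - j)) := by
      intro j hj
      rw [Finset.mem_range] at hj
      apply hδle _ _ (shiftZ_mem hΩ hω _) _ (shiftZ_mem hΩ hω _)
      intro i hi
      have hm1 : ((min j (L - 1 - j) : ℕ) : ℤ) ≤ (j : ℤ) := by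
        exact_mod_cast Nat.min_le_left _ _
      have hm2 : ((min j (L - 1 - j) : ℕ) : ℤ) ≤ ((L - 1 - j : ℕ) : ℤ) := by
        exact_mod_cast Nat.min_le_right _ _
      have habs := abs_le.1 hi
      have hji1 : 0 ≤ (j : ℤ) + i := by omega
      have hji2 : (j : ℤ) + i < (L : ℤ) := by omega
      set a : ℕ := ((j : ℤ) + i).toNat with hadef
      have haz : (a : ℤ) = (j : ℤ) + i := Int.toNat_of_nonneg hji1
      have haL : a < L := by omega
      have h1 := hk ⟨a, haL⟩
      have h2 := hk' ⟨a, haL⟩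
      simp only [shiftZ]
      rw [show i + (k + (j : ℤ)) = k + (a : ℤ) by omega,
        show i + (k' + (j : ℤ)) = k' + (a : ℤ) by omega]
      rw [h1, h2]
    have hL0 : (L : ℝ) ≠ 0 := Nat.cast_ne_zero.2 (by omega)
    calc ‖∑ j ∈ Finset.range L, (f (shiftZ (k + (j : ℤ)) ω) - f (shiftZ (k' + (j : ℤ)) ω))‖
        ≤ ∑ j ∈ Finset.range L, ‖f (shiftZ (k + (j : ℤ)) ω) - f (shiftZ (k' + (j : ℤ)) ω)‖ :=
          norm_sum_le _ _
      _ ≤ ∑ j ∈ Finset.range L, δ (min j (L - 1 - j)) := Finset.sum_le_sum hterm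
      _ ≤ ∑ j ∈ Finset.range L, (δ j + δ (L - 1 - j)) := by
          apply Finset.sum_le_sum
          intro j _
          rcases min_cases j (L - 1 - j) with ⟨hmin, _⟩ | ⟨hmin, _⟩ <;> rw [hmin]
          · linarith [hδ0le (L - 1 - j)]
          · linarith [hδ0le j]
      _ = 2 * ∑ j ∈ Finset.range L, δ j := by
          rw [Finset.sum_add_distrib, Finset.sum_range_reflect]
          ring
      _ = c L * (L : ℝ) := by
          rw [hcval L (by omega), div_mul_cancel₀ _ hL0]
  -- splitting over concatenations
  have split : ∀ vs : List (List A), (∀ v ∈ vs, v ∈ words Ω) → ∀ k : ℤ,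
      OccursAt vs.flatten ω k →
      ‖(∑ j ∈ Finset.range vs.flatten.length, f (shiftZ (k + (j : ℤ)) ω))
          - (List.map (birkhoffF f ω) vs).sum‖
        ≤ (List.map (fun v => c v.length * (v.length : ℝ)) vs).sum := by
    intro vs
    induction vs with
    | nil => intro _ k _; simp
    | cons v vs ih =>
      intro hmem k hocc'
      have hocc'' : OccursAt (v ++ vs.flatten) ω k := by simpa using hocc'
      have h1 : OccursAt v ω k := occursAt_append_left hocc''
      have h2 : OccursAt vs.flatten ω (k + (v.length : ℤ)) := occursAt_append_right hocc''
      have hsum : (∑ j ∈ Finset.range (v :: vs).flatten.length, f (shiftZ (k + (j : ℤ)) ω))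
          = (∑ j ∈ Finset.range v.length, f (shiftZ (k + (j : ℤ)) ω))
            + ∑ j ∈ Finset.range vs.flatten.length,
                f (shiftZ ((k + (v.length : ℤ)) + (j : ℤ)) ω) := by
        have hlen : (v :: vs).flatten.length = v.length + vs.flatten.length := by simp
        rw [hlen, Finset.sum_range_add]
        congr 1
        apply Finset.sum_congr rfl
        intro j _
        have : k + ((v.length + j : ℕ) : ℤ) = k + (v.length : ℤ) + (j : ℤ) := by
          push_cast; ring
        rw [this]
      rw [List.map_cons, List.sum_cons, List.map_cons, List.sum_cons, hsum, add_sub_add_comm]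
      refine le_trans (norm_add_le _ _) (add_le_add ?_ ?_)
      · exact single v (hmem v (by simp)) k h1
      · exact ih (fun u hu => hmem u (by simp [hu])) _ h2
  refine ⟨M + 1, by linarith, c, hcanti, hcnonneg, hctend, ?_, ?_⟩
  · intro vs hvs hflat
    exact split vs hvs ((firstOcc ω vs.flatten : ℕ) : ℤ) (hocc _ hflat)
  · intro v hv
    have hrfl : birkhoffF f ω v
        = ∑ j ∈ Finset.range v.length, f (shiftZ (((firstOcc ω v : ℕ) : ℤ) + (j : ℤ)) ω) := rfl
    rw [hrfl]
    calc ‖∑ j ∈ Finset.range v.length, f (shiftZ (((firstOcc ω v : ℕ) : ℤ) + (j : ℤ)) ω)‖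
        ≤ ∑ j ∈ Finset.range v.length,
            ‖f (shiftZ (((firstOcc ω v : ℕ) : ℤ) + (j : ℤ)) ω)‖ := norm_sum_le _ _
      _ ≤ ∑ _j ∈ Finset.range v.length, M :=
          Finset.sum_le_sum fun j _ => hM _ (shiftZ_mem hΩ hω _)
      _ = M * (v.length : ℝ) := by
          rw [Finset.sum_const, Finset.card_range, nsmul_eq_mul]; ring
      _ ≤ (M + 1) * (v.length : ℝ) := by
          have h0 : (0 : ℝ) ≤ (v.length : ℝ) := Nat.cast_nonneg _
          nlinarith

end SubshiftErgodic
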